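/- Let A = (a_{i_1 … i_k}) be an order-k, dimension-n complex tensor with k ≥ 2, and let δ_1, …, δ_n be nonzero complex numbers. Define the order-k, dimension-n tensor B = (b_{i_1 … i_k}) by b_{i_1 i_2 … i_k} = δ_{i_1}^{−(k−1)} · a_{i_1 i_2 … i_k} · δ_{i_2} ⋯ δ_{i_k} (this is the diagonal similarity B = D^{−(k−1)} · A · D for the diagonal matrix D = diag(δ_1,…,δ_n)). Then a complex number λ is an eigenvalue of A if and only if λ is an eigenvalue of B. -/

import Mathlib

open Finset

/-- A complex number `lam` is an *eigenvalue* of the order-`k`, dimension-`n` tensor `T`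
(whose entry `t_{i i₂ … i_k}` is represented as `T i f` with `f = (i₂, …, i_k)`)
if there is a nonzero vector `x : Fin n → ℂ` with
`∑_{i₂,…,i_k} t_{i i₂ … i_k} x_{i₂} ⋯ x_{i_k} = lam · x_i^{k−1}` for every `i`. -/
def IsTensorEigenvalue (n k : ℕ) (T : Fin n → (Fin (k - 1) → Fin n) → ℂ) (lam : ℂ) : Prop :=
  ∃ x : Fin n → ℂ, x ≠ 0 ∧ ∀ i : Fin n,
    ∑ f : Fin (k - 1) → Fin n, T i f * ∏ j, x (f j) = lam * x i ^ (k - 1)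

lemma diag_aux (n k : ℕ) (A : Fin n → (Fin (k - 1) → Fin n) → ℂ)
    (δ : Fin n → ℂ) (hδ : ∀ i, δ i ≠ 0) (lam : ℂ)
    (h : IsTensorEigenvalue n k A lam) :
    IsTensorEigenvalue n k
      (fun i f => (δ i)⁻¹ ^ (k - 1) * A i f * ∏ j, δ (f j)) lam := by
  obtain ⟨x, hx, hx2⟩ := h
  obtain ⟨j, hj⟩ := Function.ne_iff.mp hx
  refine ⟨fun i => (δ i)⁻¹ * x i, ?_, ?_⟩
  · intro h0
    have := congrFun h0 j
    simp only [Pi.zero_apply, mul_eq_zero, inv_eq_zero] at this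
    rcases this with h | h
    · exact hδ j h
    · exact hj h
  · intro i
    have key : ∀ f : Fin (k - 1) → Fin n,
        ((δ i)⁻¹ ^ (k - 1) * A i f * ∏ j, δ (f j)) * ∏ j, ((δ (f j))⁻¹ * x (f j))
          = (δ i)⁻¹ ^ (k - 1) * (A i f * ∏ j, x (f j)) := by
      intro f
      rw [mul_assoc, mul_assoc, ← Finset.prod_mul_distrib]
      congr 2
      refine Finset.prod_congr rfl fun j _ => ?_
      field_simp [hδ]
    calc ∑ f : Fin (k - 1) → Fin n,
          ((δ i)⁻¹ ^ (k - 1) * A i f * ∏ j, δ (f j)) * ∏ j, ((δ (f j))⁻¹ * x (f j))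
        = ∑ f : Fin (k - 1) → Fin n, (δ i)⁻¹ ^ (k - 1) * (A i f * ∏ j, x (f j)) := by
          exact Finset.sum_congr rfl fun f _ => key f
      _ = (δ i)⁻¹ ^ (k - 1) * ∑ f : Fin (k - 1) → Fin n, A i f * ∏ j, x (f j) := by
          rw [Finset.mul_sum]
      _ = lam * ((δ i)⁻¹ * x i) ^ (k - 1) := by
          rw [hx2 i, mul_pow]; ring

theorem diag_similar_same_eigenvalues (n k : ℕ) (hk : 2 ≤ k) (hn : 1 ≤ n)
    (A : Fin n → (Fin (k - 1) → Fin n) → ℂ)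
    (δ : Fin n → ℂ) (hδ : ∀ i, δ i ≠ 0) (lam : ℂ) :
    IsTensorEigenvalue n k A lam ↔
      IsTensorEigenvalue n k
        (fun i f => (δ i)⁻¹ ^ (k - 1) * A i f * ∏ j, δ (f j)) lam := by
  constructor
  · exact diag_aux n k A δ hδ lam
  · intro h
    have := diag_aux n k _ (fun i => (δ i)⁻¹) (fun i => inv_ne_zero (hδ i)) lam h
    convert this using 3 with i f
    simp only [inv_inv, Finset.prod_inv_distrib]
    have h1 : (δ i) ^ (k - 1) ≠ 0 := pow_ne_zero _ (hδ i)
    have h2 : (∏ j, δ (f j)) ≠ 0 := Finset.prod_ne_zero_iff.mpr fun j _ => hδ (f j)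
    field_simp
    rw [one_div, inv_pow, mul_assoc, mul_inv_cancel₀ h1, mul_one]
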